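/- For every integer p ≥ 2 and every ε ∈ (0, p−1), there exists a p-extendible independence system (X, I) with nonnegative additive weights w such that the instance is (p−ε)-stable and yet every greedy run outputs a set different from the optimal solution S* = argmax_{S ∈ I} w(S). -/

import Mathlib

open Finset

/-- A downward-closed independence system on the finite type `α`. -/
def DownClosed {α : Type*} (I : Finset α → Prop) : Prop :=
  I ∅ ∧ ∀ A B : Finset α, I A → B ⊆ A → I B
/-- `(X, I)` is `p`-extendible: whenever `A ⊆ B`, `A, B ∈ I` and `A ∪ {e} ∈ I`,
there is `Z ⊆ B \ A` with `|Z| ≤ p` and `(B \ Z) ∪ {e} ∈ I`. -/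
def Extendible {α : Type*} [DecidableEq α] (p : ℕ) (I : Finset α → Prop) : Prop :=
  ∀ A B : Finset α, ∀ e : α, A ⊆ B → I A → I B → I (insert e A) →
    ∃ Z ⊆ B \ A, Z.card ≤ p ∧ I (insert e (B \ Z))
/-- The additive instance `(I, w)` is `γ`-stable with (unique) optimal solution `S`:
for every perturbation `w'` with `w ≤ w' ≤ γ·w`, `S` is the unique maximizer of `w'` over `I`. -/
def AddStable {α : Type*} (I : Finset α → Prop) (w : α → ℝ) (γ : ℝ)
    (S : Finset α) : Prop :=
  I S ∧ ∀ w' : α → ℝ, (∀ e, w e ≤ w' e ∧ w' e ≤ γ * w e) →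
    ∀ T : Finset α, I T → T ≠ S → ∑ e ∈ T, w' e < ∑ e ∈ S, w' e
/-- A greedy run for additive weights: `e₁, …, e_k` with every prefix independent,
each `eᵢ` a maximum-weight feasible addition, and the final set maximal independent. -/
def GreedyRun {α : Type*} [DecidableEq α] (I : Finset α → Prop) (w : α → ℝ)
    (l : List α) : Prop :=
  (∀ i : Fin l.length,
    l.get i ∉ (l.take i.val).toFinset ∧
    I (insert (l.get i) (l.take i.val).toFinset) ∧
    ∀ e : α, e ∉ (l.take i.val).toFinset → I (insert e (l.take i.val).toFinset) →
      w e ≤ w (l.get i)) ∧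
  ∀ e : α, e ∉ l.toFinset → ¬ I (insert e l.toFinset)

/-- For every integer `p ≥ 2` and `ε ∈ (0, p−1)` there is a `p`-extendible
independence system with nonnegative additive weights that is `(p−ε)`-stable, yet every
greedy run outputs a set different from the optimal solution `S*`. -/
theorem greedy_fails_below_p_stability (p : ℕ) (hp : 2 ≤ p)
    (ε : ℝ) (hε0 : 0 < ε) (hε1 : ε < (p : ℝ) - 1) :
    ∃ (n : ℕ) (I : Finset (Fin n) → Prop) (w : Fin n → ℝ) (Sstar : Finset (Fin n)),
      (∀ e, 0 ≤ w e) ∧ DownClosed I ∧ Extendible p I ∧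
      AddStable I w ((p : ℝ) - ε) Sstar ∧
      ∀ l : List (Fin n), GreedyRun I w l → l.toFinset ≠ Sstar := by
  have hpR : (2:ℝ) ≤ (p:ℝ) := by exact_mod_cast hp
  set γ : ℝ := (p : ℝ) - ε with hγdef
  have hγ1 : 1 < γ := by simp only [hγdef]; linarith
  have hγ0 : 0 < γ := by linarith
  set δ : ℝ := ε / (2 * γ) with hδdef
  have hδ0 : 0 < δ := by positivity
  have hγδ : γ * δ = ε / 2 := by
    rw [hδdef]; field_simp
  have hkey : γ * (1 + δ) < (p : ℝ) := by
    have : γ * (1 + δ) = γ + γ * δ := by ring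
    rw [this, hγδ, hγdef]; linarith
  set a : Fin (p+1) := 0 with hadef
  set Bset : Finset (Fin (p+1)) := {a}ᶜ with hBdef
  have hBcard : Bset.card = p := by
    rw [hBdef, Finset.card_compl, Finset.card_singleton, Fintype.card_fin]; omega
  set I : Finset (Fin (p+1)) → Prop := fun S => S ⊆ Bset ∨ S ⊆ {a} with hIdef
  set w : Fin (p+1) → ℝ := fun e => if e = a then 1 + δ else 1 with hwdef
  have hw1 : ∀ e, (1:ℝ) ≤ w e := by
    intro e; rw [hwdef]; dsimp only; split_ifs <;> linarith
  have hcardle : ∀ S, I S → S.card ≤ p := by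
    intro S hS
    rcases hS with h | h
    · calc S.card ≤ Bset.card := Finset.card_le_card h
        _ = p := hBcard
    · calc S.card ≤ ({a} : Finset _).card := Finset.card_le_card h
        _ = 1 := Finset.card_singleton a
        _ ≤ p := by omega
  refine ⟨p+1, I, w, Bset, ?_, ?_, ?_, ?_, ?_⟩
  · intro e; linarith [hw1 e]
  · exact ⟨Or.inl (Finset.empty_subset _),
      fun A B hA hBA => hA.imp (fun h => hBA.trans h) (fun h => hBA.trans h)⟩
  · intro A B e hAB hA hB hins
    refine ⟨B \ A, Finset.Subset.refl _, ?_, ?_⟩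
    · exact le_trans (Finset.card_le_card (Finset.sdiff_subset)) (hcardle B hB)
    · have : B \ (B \ A) = A := by
        rw [Finset.sdiff_sdiff_self_left, Finset.inter_eq_right.mpr hAB]
      rw [this]; exact hins
  · refine ⟨Or.inl (Finset.Subset.refl _), ?_⟩
    intro w' hw' T hT hTne
    have hstar : (p : ℝ) ≤ ∑ e ∈ Bset, w' e := by
      calc (p : ℝ) = ∑ _e ∈ Bset, (1:ℝ) := by
              rw [Finset.sum_const, hBcard, nsmul_eq_mul, mul_one]
        _ ≤ ∑ e ∈ Bset, w' e :=
              Finset.sum_le_sum (fun e _ => le_trans (hw1 e) (hw' e).1)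
    rcases hT with hsub | hsub
    · have hss : T ⊂ Bset := hsub.ssubset_of_ne hTne
      obtain ⟨x, hxB, hxT⟩ := Finset.exists_of_ssubset hss
      exact Finset.sum_lt_sum_of_subset hsub hxB hxT
        (lt_of_lt_of_le (by linarith [hw1 x]) (hw' x).1)
        (fun j _ _ => le_trans (by linarith [hw1 j]) (hw' j).1)
    · have hwa : w a = 1 + δ := by rw [hwdef]; simp
      have hup : w' a ≤ γ * (1 + δ) := by
        have := (hw' a).2; rwa [hwa] at this
      have hTle : ∑ e ∈ T, w' e ≤ w' a := by
        rcases Finset.subset_singleton_iff.mp hsub with rfl | rfl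
        · simp; linarith [hw1 a, (hw' a).1, hδ0]
        · simp
      linarith
  · intro l hl hcontra
    have hBne : Bset.Nonempty := by
      rw [← Finset.card_pos, hBcard]; omega
    have hlen : 0 < l.length := by
      rcases Nat.eq_zero_or_pos l.length with h0 | h0
      · exfalso
        have : l = [] := List.eq_nil_of_length_eq_zero h0
        rw [this] at hcontra
        simp at hcontra
        obtain ⟨x, hx⟩ := hBne
        rw [← hcontra] at hx
        exact absurd hx (Finset.notMem_empty x)
      · exact h0
    obtain ⟨h1, h2, h3⟩ := hl.1 ⟨0, hlen⟩
    set e1 := l.get ⟨0, hlen⟩ with he1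
    have he1mem : e1 ∈ l.toFinset := List.mem_toFinset.mpr (l.get_mem _)
    have he1B : e1 ∈ Bset := by rw [hcontra] at he1mem; exact he1mem
    have he1a : e1 ≠ a := by
      rw [hBdef] at he1B; simpa using he1B
    have htake : (l.take 0).toFinset = (∅ : Finset (Fin (p+1))) := by simp
    have hwle : w a ≤ w e1 := by
      apply h3 a
      · rw [htake]; exact Finset.notMem_empty a
      · rw [htake]
        exact Or.inr (by simp)
    have hwa : w a = 1 + δ := by rw [hwdef]; simp
    have hwe1 : w e1 = 1 := by rw [hwdef]; simp [he1a]
    rw [hwa, hwe1] at hwle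
    linarith
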